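/- Gentle Operator Lemma for Ensembles: let {p(x), ρ_x}_{x ∈ 𝒳} be a finite ensemble of d × d density matrices (p a probability distribution on the finite set 𝒳, each ρ_x positive semidefinite with unit trace) with average state ρ̄ = Σ_x p(x) ρ_x, let Λ be a Hermitian d × d matrix with 0 ≤ Λ ≤ I, and let ε ≥ 0 satisfy Tr{Λρ̄} ≥ 1 − ε. Then Σ_x p(x) ‖√Λ ρ_x √Λ − ρ_x‖₁ ≤ 2√ε, where √Λ is the positive semidefinite square root of Λ. -/

import Mathlib

open scoped ComplexOrder

noncomputable section

/-- The positive semidefinite square root of a positive semidefinite matrix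
(`Matrix.PosSemidef.sqrt` of the older Mathlib, removed since; restated with its old definition). -/
def Matrix.PosSemidef.sqrt {n : Type*} [Fintype n] [DecidableEq n] {𝕜 : Type*} [RCLike 𝕜]
    {A : Matrix n n 𝕜} (hA : A.PosSemidef) : Matrix n n 𝕜 :=
  hA.1.eigenvectorUnitary.1 * Matrix.diagonal ((↑) ∘ (√·) ∘ hA.1.eigenvalues) *
  (star hA.1.eigenvectorUnitary : Matrix n n 𝕜)

/-- The trace norm `‖A‖₁ = Tr √(AᴴA)` of a complex square matrix. -/
def traceNorm {d : ℕ} (A : Matrix (Fin d) (Fin d) ℂ) : ℝ :=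
  ((Matrix.posSemidef_conjTranspose_mul_self A).sqrt.trace).re

lemma Matrix.PosSemidef.posSemidef_sqrt {n : Type*} [Fintype n] [DecidableEq n]
    {A : Matrix n n ℂ} (hA : A.PosSemidef) : hA.sqrt.PosSemidef := by
  unfold Matrix.PosSemidef.sqrt
  have hd : (Matrix.diagonal ((↑) ∘ (√·) ∘ hA.1.eigenvalues) : Matrix n n ℂ).PosSemidef := by
    apply Matrix.PosSemidef.diagonal
    intro i
    exact RCLike.ofReal_nonneg.mpr (Real.sqrt_nonneg _)
  exact hd.mul_mul_conjTranspose_same hA.1.eigenvectorUnitary.1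

lemma Matrix.PosSemidef.sqrt_mul_self {n : Type*} [Fintype n] [DecidableEq n]
    {A : Matrix n n ℂ} (hA : A.PosSemidef) : hA.sqrt * hA.sqrt = A := by
  have hU : (star hA.1.eigenvectorUnitary.1) * hA.1.eigenvectorUnitary.1 = 1 :=
    Unitary.star_mul_self_of_mem hA.1.eigenvectorUnitary.2
  have hspec : A = hA.1.eigenvectorUnitary.1 * Matrix.diagonal (fun i => (hA.1.eigenvalues i : ℂ))
      * star hA.1.eigenvectorUnitary.1 := by
    simpa [Function.comp_def] using hA.1.spectral_theorem
  unfold Matrix.PosSemidef.sqrt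
  set U := hA.1.eigenvectorUnitary.1
  set D := Matrix.diagonal (((↑) ∘ (√·) ∘ hA.1.eigenvalues) : n → ℂ) with hD
  have hUD : U * D * star U * (U * D * star U) = U * (D * D) * star U := by
    calc _ = U * D * (star U * U) * (D * star U) := by simp only [Matrix.mul_assoc]
      _ = _ := by rw [hU]; simp only [Matrix.mul_one, Matrix.mul_assoc]
  refine hUD.trans ?_
  conv_rhs => rw [hspec]
  rw [hD, Matrix.diagonal_mul_diagonal]
  refine congrArg (· * star U) (congrArg (U * ·) (congrArg Matrix.diagonal ?_))
  funext i
  show ((√(hA.1.eigenvalues i) : ℝ) : ℂ) * ((√(hA.1.eigenvalues i) : ℝ) : ℂ)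
    = ((hA.1.eigenvalues i : ℝ) : ℂ)
  rw [← Complex.ofReal_mul, Real.mul_self_sqrt (hA.eigenvalues_nonneg i)]

open scoped MatrixOrder in
lemma Matrix.PosSemidef.eq_sqrt_of_sq_eq {n : Type*} [Fintype n] [DecidableEq n]
    {A : Matrix n n ℂ} (hA : A.PosSemidef) (B : Matrix n n ℂ) (hAB : A ^ 2 = B)
    {hB : B.PosSemidef} : A = hB.sqrt := by
  have h1 : CFC.sqrt B = A := CFC.sqrt_unique (by rw [← hAB, sq]) hA.nonneg
  have h2 : CFC.sqrt B = hB.sqrt := CFC.sqrt_unique hB.sqrt_mul_self hB.posSemidef_sqrt.nonneg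
  rw [← h1, h2]

namespace GentleAux

open Matrix

variable {n : Type*} [Fintype n] [DecidableEq n]

lemma trace_re_nonneg {N : Matrix n n ℂ} (hN : N.PosSemidef) : 0 ≤ N.trace.re := by
  rw [Matrix.trace]
  simp only [Complex.re_sum, Matrix.diag]
  refine Finset.sum_nonneg fun i _ => ?_
  have := hN.re_dotProduct_nonneg (Pi.single i 1)
  simpa [dotProduct, Matrix.mulVec, Pi.single_apply] using this

lemma trace_mul_re_nonneg {N T : Matrix n n ℂ} (hN : N.PosSemidef) (hT : T.PosSemidef) :
    0 ≤ (N * T).trace.re := by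
  have hs := hN.sqrt_mul_self
  have hherm : hN.sqrt.conjTranspose = hN.sqrt := hN.posSemidef_sqrt.isHermitian
  have : (N * T).trace = (hN.sqrt * T * hN.sqrt).trace := by
    conv_lhs => rw [← hs]
    rw [Matrix.trace_mul_cycle, Matrix.trace_mul_cycle]
  rw [this]
  exact trace_re_nonneg (by simpa [hherm] using hT.mul_mul_conjTranspose_same hN.sqrt)

lemma frob_cs (A B : Matrix n n ℂ) :
    ‖(Aᴴ * B).trace‖ ≤ Real.sqrt ((Aᴴ * A).trace.re) * Real.sqrt ((Bᴴ * B).trace.re) := by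
  classical
  let f : EuclideanSpace ℂ (n × n) := WithLp.toLp 2 (fun p : n × n => A p.1 p.2)
  let g : EuclideanSpace ℂ (n × n) := WithLp.toLp 2 (fun p : n × n => B p.1 p.2)
  have htr : (Aᴴ * B).trace = inner (𝕜 := ℂ) f g := by
    simp only [PiLp.inner_apply, RCLike.inner_apply, Matrix.trace, Matrix.diag,
      Matrix.mul_apply, Matrix.conjTranspose_apply]
    rw [Fintype.sum_prod_type]
    rw [Finset.sum_comm]
    refine Finset.sum_congr rfl fun x _ => Finset.sum_congr rfl fun y _ => ?_
    exact mul_comm _ _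
  have hnorm : ∀ (M : Matrix n n ℂ) (v : EuclideanSpace ℂ (n × n)),
      (∀ p : n × n, v p = M p.1 p.2) → Real.sqrt ((Mᴴ * M).trace.re) = ‖v‖ := by
    intro M v hv
    rw [EuclideanSpace.norm_eq]
    congr 1
    simp only [Matrix.trace, Matrix.diag, Matrix.mul_apply, Matrix.conjTranspose_apply,
      Complex.re_sum, hv]
    rw [Fintype.sum_prod_type, Finset.sum_comm]
    congr 1; ext j; congr 1; ext i
    simp only [Complex.sq_norm, Complex.normSq_apply,
      Complex.star_def, Complex.mul_re, Complex.conj_re, Complex.conj_im]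
    ring
  rw [htr, hnorm A f (fun p => rfl), hnorm B g (fun p => rfl)]
  exact norm_inner_le_norm f g

lemma weighted_cs {ρ : Matrix n n ℂ} (hρ : ρ.PosSemidef) (X Y : Matrix n n ℂ) :
    ‖(X * ρ * Y).trace‖ ≤
      Real.sqrt ((X * ρ * Xᴴ).trace.re) * Real.sqrt ((Yᴴ * ρ * Y).trace.re) := by
  have hr : hρ.sqrt * hρ.sqrt = ρ := hρ.sqrt_mul_self
  have hrh : hρ.sqrtᴴ = hρ.sqrt := hρ.posSemidef_sqrt.isHermitian
  have h1 : X * ρ * Y = ((X * hρ.sqrt)ᴴ)ᴴ * (hρ.sqrt * Y) := by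
    simp only [conjTranspose_conjTranspose, ← hr, Matrix.mul_assoc]
  have h2 : ((X * hρ.sqrt)ᴴ)ᴴ * (X * hρ.sqrt)ᴴ = X * ρ * Xᴴ := by
    simp only [conjTranspose_conjTranspose, conjTranspose_mul, hrh, ← hr, Matrix.mul_assoc]
  have h3 : (hρ.sqrt * Y)ᴴ * (hρ.sqrt * Y) = Yᴴ * ρ * Y := by
    simp only [conjTranspose_mul, hrh, ← hr, Matrix.mul_assoc]
  calc ‖(X * ρ * Y).trace‖
      = ‖(((X * hρ.sqrt)ᴴ)ᴴ * (hρ.sqrt * Y)).trace‖ := by rw [← h1]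
    _ ≤ _ := by
        have := frob_cs (X * hρ.sqrt)ᴴ (hρ.sqrt * Y)
        rw [h2, h3] at this
        exact this

lemma conj_mul_conj (U D₁ D₂ : Matrix n n ℂ) (hU : Uᴴ * U = 1) :
    (U * D₁ * Uᴴ) * (U * D₂ * Uᴴ) = U * (D₁ * D₂) * Uᴴ := by
  calc (U * D₁ * Uᴴ) * (U * D₂ * Uᴴ) = U * D₁ * (Uᴴ * U) * (D₂ * Uᴴ) := by
        simp only [Matrix.mul_assoc]
      _ = U * (D₁ * D₂) * Uᴴ := by rw [hU]; simp only [Matrix.mul_one, Matrix.mul_assoc]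

/-- sign decomposition: for Hermitian `M` there is `C` with `Cᴴ * C = 1` and
`√(MᴴM) = C * M`. -/
lemma abs_decomp {M : Matrix n n ℂ} (hM : M.IsHermitian) :
    ∃ C : Matrix n n ℂ, Cᴴ * C = 1 ∧
      (Matrix.posSemidef_conjTranspose_mul_self M).sqrt = C * M := by
  classical
  set U : Matrix n n ℂ := (hM.eigenvectorUnitary : Matrix n n ℂ) with hUdef
  have hU1 : Uᴴ * U = 1 := by
    simpa [Matrix.star_eq_conjTranspose] using
      (Matrix.mem_unitaryGroup_iff').mp hM.eigenvectorUnitary.2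
  have hU2 : U * Uᴴ = 1 := by
    simpa [Matrix.star_eq_conjTranspose] using
      (Matrix.mem_unitaryGroup_iff).mp hM.eigenvectorUnitary.2
  set sgn : n → ℂ := fun i => if 0 ≤ hM.eigenvalues i then 1 else -1 with hsgn
  set C : Matrix n n ℂ := U * diagonal sgn * Uᴴ with hC
  have hspec : M = U * diagonal (fun i => (hM.eigenvalues i : ℂ)) * Uᴴ := by
    simpa [Matrix.star_eq_conjTranspose, Function.comp_def] using hM.spectral_theorem
  have hCH : Cᴴ = U * diagonal (fun i => star (sgn i)) * Uᴴ := by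
    simp [hC, Matrix.conjTranspose_mul, Matrix.diagonal_conjTranspose, Matrix.mul_assoc]
    rfl
  refine ⟨C, ?_, ?_⟩
  · rw [hCH, hC, conj_mul_conj _ _ _ hU1, Matrix.diagonal_mul_diagonal]
    have : (fun i => star (sgn i) * sgn i) = fun _ => (1 : ℂ) := by
      funext i
      by_cases h : 0 ≤ hM.eigenvalues i <;> simp [hsgn, h]
    rw [this, Matrix.diagonal_one, Matrix.mul_one, hU2]
  · have hP : (U * diagonal (fun i => ((|hM.eigenvalues i| : ℝ) : ℂ)) * Uᴴ).PosSemidef := by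
      apply Matrix.PosSemidef.mul_mul_conjTranspose_same
      apply Matrix.PosSemidef.diagonal
      intro i
      simp only [Pi.zero_apply]
      exact Complex.zero_le_real.mpr (abs_nonneg _)
    have hsq : (U * diagonal (fun i => ((|hM.eigenvalues i| : ℝ) : ℂ)) * Uᴴ) ^ 2 = Mᴴ * M := by
      rw [hM.eq]
      conv_rhs => rw [hspec]
      rw [pow_two, conj_mul_conj _ _ _ hU1, conj_mul_conj _ _ _ hU1]
      rw [Matrix.diagonal_mul_diagonal, Matrix.diagonal_mul_diagonal]
      have hfg : (fun i => ((|hM.eigenvalues i| : ℝ) : ℂ) * ((|hM.eigenvalues i| : ℝ) : ℂ))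
          = fun i => (hM.eigenvalues i : ℂ) * (hM.eigenvalues i : ℂ) := by
        funext i
        exact_mod_cast abs_mul_abs_self _
      rw [hfg]
    have h1 : U * diagonal (fun i => ((|hM.eigenvalues i| : ℝ) : ℂ)) * Uᴴ
        = (Matrix.posSemidef_conjTranspose_mul_self M).sqrt :=
      hP.eq_sqrt_of_sq_eq _ hsq
    have hCM : C * M = U * (diagonal sgn * diagonal (fun i => (hM.eigenvalues i : ℂ))) * Uᴴ := by
      conv_lhs => rw [hC, hspec]
      exact conj_mul_conj _ _ _ hU1
    rw [← h1, hCM, Matrix.diagonal_mul_diagonal]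
    have hfg : (fun i => ((|hM.eigenvalues i| : ℝ) : ℂ))
        = fun i => sgn i * (hM.eigenvalues i : ℂ) := by
      funext i
      by_cases h : 0 ≤ hM.eigenvalues i
      · simp [hsgn, h, abs_of_nonneg h]
      · push_neg at h
        simp [hsgn, not_le.mpr h, abs_of_neg h, neg_one_mul]
    rw [hfg]

lemma eig_le_one {Λ : Matrix n n ℂ} (hΛ : Λ.PosSemidef) (hΛI : (1 - Λ).PosSemidef) (i : n) :
    hΛ.1.eigenvalues i ≤ 1 := by
  have h0 := hΛI.re_dotProduct_nonneg ⇑(hΛ.1.eigenvectorBasis i)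
  have hv : ((1 - Λ) *ᵥ ⇑(hΛ.1.eigenvectorBasis i))
      = ⇑(hΛ.1.eigenvectorBasis i) - Λ *ᵥ ⇑(hΛ.1.eigenvectorBasis i) := by
    rw [Matrix.sub_mulVec, Matrix.one_mulVec]
  rw [hv, dotProduct_sub, map_sub] at h0
  have hval := hΛ.1.eigenvalues_eq i
  have hnorm : RCLike.re (dotProduct (star ⇑(hΛ.1.eigenvectorBasis i))
      ⇑(hΛ.1.eigenvectorBasis i)) = 1 := by
    rw [dotProduct_comm, ← EuclideanSpace.inner_eq_star_dotProduct]
    have := hΛ.1.eigenvectorBasis.orthonormal.1 i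
    rw [@inner_self_eq_norm_sq_to_K ℂ]
    simp [this]
  rw [hval]
  linarith [h0, hnorm]

lemma sqrt_sub_psd {Λ : Matrix n n ℂ} (hΛ : Λ.PosSemidef) (hΛI : (1 - Λ).PosSemidef) :
    (hΛ.sqrt - Λ).PosSemidef := by
  have hspec : Λ = hΛ.1.eigenvectorUnitary.1 *
      diagonal (fun i => (hΛ.1.eigenvalues i : ℂ)) * (star hΛ.1.eigenvectorUnitary.1) := by
    simpa [Function.comp_def] using hΛ.1.spectral_theorem
  have hdef : hΛ.sqrt = hΛ.1.eigenvectorUnitary.1 *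
      diagonal (fun i => ((Real.sqrt (hΛ.1.eigenvalues i) : ℝ) : ℂ)) *
      (star hΛ.1.eigenvectorUnitary.1) := by
    rw [Matrix.PosSemidef.sqrt]; rfl
  have : hΛ.sqrt - Λ = hΛ.1.eigenvectorUnitary.1 *
      diagonal (fun i => ((Real.sqrt (hΛ.1.eigenvalues i) - hΛ.1.eigenvalues i : ℝ) : ℂ)) *
      (star hΛ.1.eigenvectorUnitary.1) := by
    have hd : diagonal (fun i => ((Real.sqrt (hΛ.1.eigenvalues i) : ℝ) : ℂ))
        - diagonal (fun i => (hΛ.1.eigenvalues i : ℂ))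
        = diagonal (fun i => ((Real.sqrt (hΛ.1.eigenvalues i) - hΛ.1.eigenvalues i : ℝ) : ℂ)) := by
      rw [Matrix.diagonal_sub]
      congr 1
      funext i
      push_cast
      ring
    rw [← hd, Matrix.mul_sub, Matrix.sub_mul, ← hspec, ← hdef]
  rw [this]
  have := Matrix.PosSemidef.mul_mul_conjTranspose_same (B := hΛ.1.eigenvectorUnitary.1)
    (Matrix.PosSemidef.diagonal (d := fun i =>
      ((Real.sqrt (hΛ.1.eigenvalues i) - hΛ.1.eigenvalues i : ℝ) : ℂ)) ?_)
  · simpa [Matrix.star_eq_conjTranspose] using this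
  · intro i
    simp only [Pi.zero_apply]
    refine Complex.zero_le_real.mpr (sub_nonneg.mpr ?_)
    have h0 := hΛ.eigenvalues_nonneg i
    have h1 := eig_le_one hΛ hΛI i
    nlinarith [Real.sq_sqrt h0, Real.sqrt_nonneg (hΛ.1.eigenvalues i), Real.sqrt_le_sqrt h1]

end GentleAux

set_option maxHeartbeats 1000000 in
open GentleAux Matrix in
/-- Single-state gentle operator lemma. -/
lemma gentle_single {d : ℕ} {Λ ρ : Matrix (Fin d) (Fin d) ℂ}
    (hΛ : Λ.PosSemidef) (hΛI : (1 - Λ).PosSemidef)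
    (hρ : ρ.PosSemidef) (hρtr : ρ.trace = 1) :
    traceNorm (hΛ.sqrt * ρ * hΛ.sqrt - ρ) ≤ 2 * Real.sqrt (((1 - Λ) * ρ).trace.re) := by
  set s := hΛ.sqrt with hsdef
  have hs : s * s = Λ := hΛ.sqrt_mul_self
  have hsh : sᴴ = s := hΛ.posSemidef_sqrt.isHermitian
  set M := s * ρ * s - ρ with hMdef
  have hM : M.IsHermitian := by
    have h1 : (s * ρ * s).PosSemidef := by simpa [hsh] using hρ.mul_mul_conjTranspose_same s
    exact h1.isHermitian.sub hρ.isHermitian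
  obtain ⟨C, hC1, hC2⟩ := abs_decomp hM
  have conjtr : ∀ N : Matrix (Fin d) (Fin d) ℂ, (C * N * Cᴴ).trace = N.trace := by
    intro N
    rw [Matrix.trace_mul_comm, ← Matrix.mul_assoc, hC1, Matrix.one_mul]
  -- the target quantity
  set δ := ((1 - Λ) * ρ).trace.re with hδdef
  have hδ0 : 0 ≤ δ := trace_mul_re_nonneg hΛI hρ
  -- trace of ρ is 1
  have hρre : ρ.trace.re = 1 := by rw [hρtr]; rfl
  -- trace of Λρ at most 1
  have hΛρ : (Λ * ρ).trace.re ≤ 1 := by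
    have h1 : ((1 - Λ) * ρ).trace.re = ρ.trace.re - (Λ * ρ).trace.re := by
      rw [Matrix.sub_mul, Matrix.one_mul, Matrix.trace_sub, Complex.sub_re]
    have := trace_mul_re_nonneg hΛI hρ
    rw [h1] at this
    linarith
  -- key middle factor bound
  have hmid : ((s - 1) * ρ * (s - 1)).trace.re ≤ δ := by
    have hGcalc : (1 - Λ) - (s - 1) * (s - 1) = (s - Λ) + (s - Λ) := by
      have : (s - 1) * (s - 1) = s * s - s - s + 1 := by noncomm_ring
      rw [this, hs]
      abel
    have hG : ((1 - Λ) - (s - 1) * (s - 1)).PosSemidef := by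
      rw [hGcalc]
      exact (sqrt_sub_psd hΛ hΛI).add (sqrt_sub_psd hΛ hΛI)
    have h2 : 0 ≤ (((1 - Λ) - (s - 1) * (s - 1)) * ρ).trace.re := trace_mul_re_nonneg hG hρ
    have h3 : (((1 - Λ) - (s - 1) * (s - 1)) * ρ).trace.re
        = δ - ((s - 1) * (s - 1) * ρ).trace.re := by
      rw [Matrix.sub_mul, Matrix.trace_sub, Complex.sub_re, hδdef]
    have h4 : ((s - 1) * ρ * (s - 1)).trace = ((s - 1) * (s - 1) * ρ).trace := by
      rw [Matrix.trace_mul_cycle]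
    rw [h4]
    rw [h3] at h2
    linarith
  -- rewrite the trace norm through the sign matrix
  have htn : traceNorm M = ((C * M).trace).re := by
    rw [traceNorm, hC2]
  -- split M
  have hsplit : C * M = (C * s) * ρ * (s - 1) + (C * (s - 1)) * ρ * 1 := by
    rw [hMdef]; noncomm_ring
  -- first term bound
  have hb1 : ((C * s) * ρ * (s - 1)).trace.re ≤ 1 * Real.sqrt δ := by
    have hcs := weighted_cs hρ (C * s) (s - 1)
    have he1 : (C * s) * ρ * (C * s)ᴴ = C * (s * ρ * s) * Cᴴ := by
      rw [Matrix.conjTranspose_mul, hsh]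
      simp only [Matrix.mul_assoc]
    have he2 : ((C * s) * ρ * (C * s)ᴴ).trace.re = (Λ * ρ).trace.re := by
      rw [he1, conjtr]
      rw [Matrix.trace_mul_cycle, hs]
    have he3 : (s - 1)ᴴ = s - 1 := by
      rw [Matrix.conjTranspose_sub, hsh, Matrix.conjTranspose_one]
    rw [he2, he3] at hcs
    have hf1 : Real.sqrt ((Λ * ρ).trace.re) ≤ 1 := Real.sqrt_le_one.mpr hΛρ
    have hf2 : Real.sqrt (((s - 1) * ρ * (s - 1)).trace.re) ≤ Real.sqrt δ :=
      Real.sqrt_le_sqrt hmid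
    refine le_trans (Complex.re_le_norm _) (hcs.trans ?_)
    exact mul_le_mul hf1 hf2 (Real.sqrt_nonneg _) zero_le_one
  -- second term bound
  have hb2 : ((C * (s - 1)) * ρ * 1).trace.re ≤ Real.sqrt δ * 1 := by
    have hcs := weighted_cs hρ (C * (s - 1)) 1
    have he3 : (s - 1)ᴴ = s - 1 := by
      rw [Matrix.conjTranspose_sub, hsh, Matrix.conjTranspose_one]
    have he1 : (C * (s - 1)) * ρ * (C * (s - 1))ᴴ = C * ((s - 1) * ρ * (s - 1)) * Cᴴ := by
      rw [Matrix.conjTranspose_mul, he3]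
      simp only [Matrix.mul_assoc]
    have he2 : ((C * (s - 1)) * ρ * (C * (s - 1))ᴴ).trace.re
        = ((s - 1) * ρ * (s - 1)).trace.re := by rw [he1, conjtr]
    have he4 : ((1 : Matrix (Fin d) (Fin d) ℂ)ᴴ * ρ * 1).trace.re = 1 := by
      rw [Matrix.conjTranspose_one, Matrix.one_mul, Matrix.mul_one, hρre]
    rw [he2, he4] at hcs
    have hf2 : Real.sqrt (((s - 1) * ρ * (s - 1)).trace.re) ≤ Real.sqrt δ :=
      Real.sqrt_le_sqrt hmid
    refine le_trans (Complex.re_le_norm _) (hcs.trans ?_)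
    rw [Real.sqrt_one]
    exact mul_le_mul_of_nonneg_right hf2 zero_le_one
  -- assemble
  rw [htn, hsplit, Matrix.trace_add, Complex.add_re]
  have := add_le_add hb1 hb2
  linarith

/-- **Gentle Operator Lemma for Ensembles**: if `{p(x), ρ_x}` is a finite ensemble of
density matrices with average state `ρ̄`, `0 ≤ Λ ≤ I`, and `Tr{Λρ̄} ≥ 1 − ε`, then
`Σ_x p(x) ‖√Λ ρ_x √Λ − ρ_x‖₁ ≤ 2√ε`. -/
theorem gentle_operator_ensemble {𝒳 : Type*} [Fintype 𝒳] {d : ℕ}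
    (p : 𝒳 → ℝ) (hp : ∀ x, 0 ≤ p x) (hp1 : ∑ x, p x = 1)
    (ρ : 𝒳 → Matrix (Fin d) (Fin d) ℂ)
    (hρ : ∀ x, (ρ x).PosSemidef) (hρtr : ∀ x, (ρ x).trace = 1)
    (Λ : Matrix (Fin d) (Fin d) ℂ)
    (hΛ : Λ.PosSemidef) (hΛI : (1 - Λ).PosSemidef)
    (ε : ℝ) (hε : 0 ≤ ε)
    (h : 1 - ε ≤ ((Λ * ∑ x, (p x : ℂ) • ρ x).trace).re) :
    ∑ x, p x * traceNorm (hΛ.sqrt * ρ x * hΛ.sqrt - ρ x) ≤ 2 * Real.sqrt ε := by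
  classical
  set δ : 𝒳 → ℝ := fun x => (((1 - Λ) * ρ x).trace).re with hδdef
  have hδ0 : ∀ x, 0 ≤ δ x := fun x => GentleAux.trace_mul_re_nonneg hΛI (hρ x)
  -- linearity of the weighted trace
  have hbar : ∀ B : Matrix (Fin d) (Fin d) ℂ,
      ((B * ∑ x, (p x : ℂ) • ρ x).trace).re = ∑ x, p x * ((B * ρ x).trace).re := by
    intro B
    rw [Finset.mul_sum, Matrix.trace_sum, Complex.re_sum]
    congr 1
    funext x
    rw [Matrix.mul_smul, Matrix.trace_smul]
    simp [Complex.real_smul]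
  -- average of δ is at most ε
  have hsum : ∑ x, p x * δ x ≤ ε := by
    have h1 : ∑ x, p x * δ x = (((1 - Λ) * ∑ x, (p x : ℂ) • ρ x).trace).re := (hbar _).symm
    have h2 : (((1 - Λ) * ∑ x, (p x : ℂ) • ρ x).trace).re
        = ((∑ x, (p x : ℂ) • ρ x : Matrix (Fin d) (Fin d) ℂ).trace).re
          - ((Λ * ∑ x, (p x : ℂ) • ρ x).trace).re := by
      rw [Matrix.sub_mul, Matrix.one_mul, Matrix.trace_sub, Complex.sub_re]
    have h3 : ((∑ x, (p x : ℂ) • ρ x : Matrix (Fin d) (Fin d) ℂ).trace).re = 1 := by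
      have := hbar 1
      rw [Matrix.one_mul] at this
      rw [this]
      have : ∀ x : 𝒳, p x * ((1 * ρ x).trace).re = p x := by
        intro x
        rw [Matrix.one_mul, hρtr x]
        simp
      rw [Finset.sum_congr rfl (fun x _ => this x), hp1]
    rw [h1, h2, h3]
    linarith
  -- Jensen/Cauchy–Schwarz step
  have hjensen : ∑ x, p x * Real.sqrt (δ x) ≤ Real.sqrt ε := by
    have hcs := Finset.sum_mul_sq_le_sq_mul_sq Finset.univ
      (fun x => Real.sqrt (p x)) (fun x => Real.sqrt (p x) * Real.sqrt (δ x))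
    have he1 : ∀ x : 𝒳, Real.sqrt (p x) * (Real.sqrt (p x) * Real.sqrt (δ x))
        = p x * Real.sqrt (δ x) := by
      intro x
      rw [← mul_assoc, Real.mul_self_sqrt (hp x)]
    have he2 : ∀ x : 𝒳, Real.sqrt (p x) ^ 2 = p x := fun x => Real.sq_sqrt (hp x)
    have he3 : ∀ x : 𝒳, (Real.sqrt (p x) * Real.sqrt (δ x)) ^ 2 = p x * δ x := by
      intro x
      rw [mul_pow, Real.sq_sqrt (hp x), Real.sq_sqrt (hδ0 x)]
    rw [Finset.sum_congr rfl (fun x _ => he1 x), Finset.sum_congr rfl (fun x _ => he2 x),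
      Finset.sum_congr rfl (fun x _ => he3 x), hp1, one_mul] at hcs
    have h0 : 0 ≤ ∑ x, p x * Real.sqrt (δ x) :=
      Finset.sum_nonneg fun x _ => mul_nonneg (hp x) (Real.sqrt_nonneg _)
    rw [Real.le_sqrt h0 hε]
    exact hcs.trans hsum
  -- combine
  have hstep : ∀ x : 𝒳, p x * traceNorm (hΛ.sqrt * ρ x * hΛ.sqrt - ρ x)
      ≤ p x * (2 * Real.sqrt (δ x)) := fun x =>
    mul_le_mul_of_nonneg_left (gentle_single hΛ hΛI (hρ x) (hρtr x)) (hp x)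
  calc ∑ x, p x * traceNorm (hΛ.sqrt * ρ x * hΛ.sqrt - ρ x)
      ≤ ∑ x, p x * (2 * Real.sqrt (δ x)) := Finset.sum_le_sum fun x _ => hstep x
    _ = 2 * ∑ x, p x * Real.sqrt (δ x) := by
        rw [Finset.mul_sum]
        congr 1
        funext x
        ring
    _ ≤ 2 * Real.sqrt ε := by linarith [hjensen]
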